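/- Fix a ∈ (0,1/2) and let ρ be the V-path quasi-metric on the dyadic rationals of [0,1] with edge lengths a^{ℓ(w)}. For every n ≥ 1 and 0 ≤ i < 2^n, ρ(i/2^n, (i+1)/2^n) = a^n; consequently the chain 0, 1/2^n, 2/2^n, …, 1 has total ρ-length 2^n a^n, which tends to 0 as n → ∞. Hence the chain-construction distance d(0,1) = 0, and the chain approach does not yield a metric. -/

import Mathlib

/-- A rational is dyadic if it can be written as `k / 2^n`. -/
def IsDyadic (q : ℚ) : Prop := ∃ (k : ℤ) (n : ℕ), q = (k : ℚ) / 2 ^ n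

/-- Membership in `Z`, the set of dyadic rationals of `[0,1]`. -/
def InZ (q : ℚ) : Prop := 0 ≤ q ∧ q ≤ 1 ∧ IsDyadic q

/-- The level of a dyadic rational: the least `n` with `q = k / 2^n` for some
integer `k`.  The endpoints `0` and `1` have level `0`. -/
noncomputable def level (q : ℚ) : ℕ := sInf {n : ℕ | ∃ k : ℤ, q = (k : ℚ) / 2 ^ n}

/-- The left neighbor `l(z) = (k-1)/2^n` of `z = k/2^n` (in lowest terms,
`k` odd, `n ≥ 1`); points of level `0` are fixed. -/
noncomputable def lnb (q : ℚ) : ℚ :=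
  if level q = 0 then q else q - (1 / 2 : ℚ) ^ level q

/-- The right neighbor `r(z) = (k+1)/2^n` of `z = k/2^n` (in lowest terms,
`k` odd, `n ≥ 1`); points of level `0` are fixed. -/
noncomputable def rnb (q : ℚ) : ℚ :=
  if level q = 0 then q else q + (1 / 2 : ℚ) ^ level q

/-- `ρ` is the V-path quasi-metric on the dyadic rationals of `[0,1]` with
parameter `a`: it is symmetric, vanishes on the diagonal, is nonnegative on
`Z`, satisfies `ρ(0,1) = 1`, and decomposes along the unique V-shaped path:
for `z < z'` in `Z` the first edge taken from the higher-level endpoint has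
length `a^level`. These properties characterize the sum of edge lengths
`a^{ℓ(w)}` along the V-shaped path joining `z` and `z'`. -/
def IsVPath (a : ℝ) (ρ : ℚ → ℚ → ℝ) : Prop :=
  (∀ z z', ρ z z' = ρ z' z) ∧
  (∀ z, ρ z z = 0) ∧
  (∀ z z', InZ z → InZ z' → 0 ≤ ρ z z') ∧
  ρ 0 1 = 1 ∧
  (∀ z z', InZ z → InZ z' → z < z' → 1 ≤ level z → level z' ≤ level z →
    ρ z z' = a ^ level z + ρ (rnb z) z') ∧
  (∀ z z', InZ z → InZ z' → z < z' → level z < level z' →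
    ρ z z' = ρ z (lnb z') + a ^ level z')

/-- `τ_n = a + a² + ⋯ + a^{n-1} + 2 a^n`. -/
noncomputable def tau (a : ℝ) (n : ℕ) : ℝ :=
  (∑ i ∈ Finset.Ico 1 n, a ^ i) + 2 * a ^ n

/-- The chain construction: `d(z,z')` is the infimum over all finite chains
`z = z_0, …, z_{n+1} = z'` of `Σ_{i=0}^{n} ρ(z_i, z_{i+1})`. -/
noncomputable def chainDist {X : Type*} (ρ : X → X → ℝ) (z z' : X) : ℝ :=
  sInf {s : ℝ | ∃ (n : ℕ) (f : ℕ → X), f 0 = z ∧ f (n + 1) = z' ∧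
    s = ∑ i ∈ Finset.range (n + 1), ρ (f i) (f (i + 1))}

lemma InZ_zero : InZ 0 := ⟨le_refl 0, zero_le_one, 0, 0, by norm_num⟩

lemma InZ_one : InZ 1 := ⟨zero_le_one, le_refl 1, 1, 0, by norm_num⟩

lemma level_le_of (q : ℚ) (k : ℤ) (n : ℕ) (h : q = (k : ℚ) / 2 ^ n) : level q ≤ n :=
  Nat.sInf_le ⟨k, h⟩

lemma level_odd (k : ℤ) (n : ℕ) (hn : 1 ≤ n) (hk : Odd k) :
    level ((k : ℚ) / 2 ^ n) = n := by
  have claim : ∀ m, m < n → ∀ j : ℤ, (k : ℚ) / 2 ^ n ≠ (j : ℚ) / 2 ^ m := by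
    intro m hm j heq
    have h2n : ((2 : ℚ) ^ n) ≠ 0 := by positivity
    have h2m : ((2 : ℚ) ^ m) ≠ 0 := by positivity
    have hq : (k : ℚ) * 2 ^ m = (j : ℚ) * 2 ^ n := by
      field_simp at heq; linarith [heq]
    have hz : k * 2 ^ m = j * 2 ^ n := by exact_mod_cast hq
    have hsplit : j * 2 ^ n = (j * 2 ^ (n - m)) * 2 ^ m := by
      rw [mul_assoc, ← pow_add]
      congr 2
      omega
    have hk2 : k = j * 2 ^ (n - m) := by
      have := hz.trans hsplit
      exact mul_right_cancel₀ (by positivity) this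
    have : (2 : ℤ) ∣ k := by
      rw [hk2]
      exact Dvd.dvd.mul_left (dvd_pow_self 2 (by omega)) j
    rcases hk with ⟨t, ht⟩
    omega
  have hmem : n ∈ {m : ℕ | ∃ j : ℤ, (k : ℚ) / 2 ^ n = (j : ℚ) / 2 ^ m} := ⟨k, rfl⟩
  refine le_antisymm (Nat.sInf_le hmem) ?_
  by_contra hlt
  push_neg at hlt
  obtain ⟨j, hj⟩ := Nat.sInf_mem (⟨n, hmem⟩ :
    {m : ℕ | ∃ j : ℤ, (k : ℚ) / 2 ^ n = (j : ℚ) / 2 ^ m}.Nonempty)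
  exact claim _ hlt j hj

lemma InZ_div (i : ℕ) (n : ℕ) (hi : i ≤ 2 ^ n) : InZ ((i : ℚ) / 2 ^ n) := by
  refine ⟨by positivity, ?_, (i : ℤ), n, by push_cast; ring⟩
  rw [div_le_one (by positivity)]
  exact_mod_cast hi

lemma rho_step (a : ℝ) (ρ : ℚ → ℚ → ℝ) (hρ : IsVPath a ρ) :
    ∀ n : ℕ, 1 ≤ n → ∀ i : ℕ, i < 2 ^ n →
      ρ ((i : ℚ) / 2 ^ n) (((i : ℚ) + 1) / 2 ^ n) = a ^ n := by
  obtain ⟨hsymm, hdiag, hnn, h01, hR, hL⟩ := hρ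
  intro n hn i hi
  have hz : InZ ((i : ℚ) / 2 ^ n) := InZ_div i n (le_of_lt hi)
  have hz' : InZ (((i : ℚ) + 1) / 2 ^ n) := by
    have := InZ_div (i + 1) n hi
    push_cast at this
    exact this
  have hlt : (i : ℚ) / 2 ^ n < ((i : ℚ) + 1) / 2 ^ n := by
    have h2 : (0:ℚ) < 2 ^ n := by positivity
    rw [div_lt_div_iff₀ h2 h2]
    nlinarith
  rcases Nat.even_or_odd i with he | ho
  · -- i even: level of right endpoint is n, left endpoint has lower level
    have hk : Odd ((i : ℤ) + 1) := by
      rcases he with ⟨t, ht⟩; exact ⟨(t : ℤ), by push_cast; omega⟩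
    have hcast : ((i : ℚ) + 1) = (((i : ℤ) + 1 : ℤ) : ℚ) := by push_cast; ring
    have hlev' : level (((i : ℚ) + 1) / 2 ^ n) = n := by
      rw [hcast]; exact level_odd _ n hn hk
    have hlevz : level ((i : ℚ) / 2 ^ n) < n := by
      rcases he with ⟨t, ht⟩
      have heq : (i : ℚ) / 2 ^ n = ((t : ℤ) : ℚ) / 2 ^ (n - 1) := by
        have h2 : (2 : ℚ) ^ n = 2 ^ (n - 1) * 2 := by
          rw [← pow_succ]; congr 1; omega
        rw [h2]
        push_cast
        rw [ht]
        push_cast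
        field_simp
        ring
      have := level_le_of _ _ _ heq
      omega
    have key := hL _ _ hz hz' hlt (by omega : level ((i : ℚ) / 2 ^ n) < level (((i : ℚ) + 1) / 2 ^ n))
    have hlnb : lnb (((i : ℚ) + 1) / 2 ^ n) = (i : ℚ) / 2 ^ n := by
      unfold lnb
      rw [hlev', if_neg (by omega)]
      rw [div_pow, one_pow]
      field_simp
      ring
    rw [key, hlnb, hdiag, hlev']
    ring
  · -- i odd: level of left endpoint is n
    have hcast : (i : ℚ) = (((i : ℤ)) : ℚ) := by push_cast; ring
    have hlev : level ((i : ℚ) / 2 ^ n) = n := by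
      rw [hcast]
      exact level_odd _ n hn (by rcases ho with ⟨t, ht⟩; exact ⟨(t : ℤ), by push_cast; omega⟩)
    have hlev' : level (((i : ℚ) + 1) / 2 ^ n) ≤ n := by
      have : ((i : ℚ) + 1) = (((i : ℤ) + 1 : ℤ) : ℚ) := by push_cast; ring
      rw [this]
      exact level_le_of _ _ _ rfl
    have key := hR _ _ hz hz' hlt (by omega) (by omega)
    have hrnb : rnb ((i : ℚ) / 2 ^ n) = ((i : ℚ) + 1) / 2 ^ n := by
      unfold rnb
      rw [hlev, if_neg (by omega)]
      rw [div_pow, one_pow]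
      field_simp
    rw [key, hrnb, hdiag, hlev]
    ring

/-- Consecutive points `i/2^n, (i+1)/2^n` have `ρ`-distance `a^n`; the chain
`0, 1/2^n, …, 1` has total length `2^n a^n → 0`, hence the chain construction
gives `d(0,1) = 0` even though `0 ≠ 1`: the chain approach fails. -/
theorem chain_approach_fails (a : ℝ) (ha0 : 0 < a) (ha : a < 1 / 2)
    (ρ : ℚ → ℚ → ℝ) (hρ : IsVPath a ρ) :
    (∀ n : ℕ, 1 ≤ n → ∀ i : ℕ, i < 2 ^ n →
      ρ ((i : ℚ) / 2 ^ n) (((i : ℚ) + 1) / 2 ^ n) = a ^ n) ∧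
    Filter.Tendsto (fun n : ℕ => (2 : ℝ) ^ n * a ^ n) Filter.atTop (nhds 0) ∧
    chainDist (fun x y : {q : ℚ // InZ q} => ρ x.1 y.1)
      ⟨0, InZ_zero⟩ ⟨1, InZ_one⟩ = 0 ∧
    (0 : ℚ) ≠ 1 := by
  obtain ⟨hsymm, hdiag, hnn, h01, hR, hL⟩ := hρ
  have hstep := rho_step a ρ ⟨hsymm, hdiag, hnn, h01, hR, hL⟩
  have htend : Filter.Tendsto (fun n : ℕ => (2 : ℝ) ^ n * a ^ n) Filter.atTop (nhds 0) := by
    have h2a : Filter.Tendsto (fun n : ℕ => (2 * a) ^ n) Filter.atTop (nhds 0) :=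
      tendsto_pow_atTop_nhds_zero_of_lt_one (by linarith) (by linarith)
    convert h2a using 2 with n
    rw [mul_pow]
  refine ⟨hstep, htend, ?_, by norm_num⟩
  set D : Set ℝ := {s : ℝ | ∃ (n : ℕ) (f : ℕ → {q : ℚ // InZ q}),
      f 0 = ⟨0, InZ_zero⟩ ∧ f (n + 1) = ⟨1, InZ_one⟩ ∧
      s = ∑ i ∈ Finset.range (n + 1), ρ (f i).1 (f (i + 1)).1} with hD
  have hlb : ∀ s ∈ D, (0 : ℝ) ≤ s := by
    rintro s ⟨n, f, _, _, rfl⟩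
    exact Finset.sum_nonneg fun i _ => hnn _ _ (f i).2 (f (i + 1)).2
  have hmem : ∀ m : ℕ, 1 ≤ m → ((2 : ℝ) ^ m * a ^ m) ∈ D := by
    intro m hm
    have h2m : 1 ≤ 2 ^ m := Nat.one_le_two_pow
    refine ⟨2 ^ m - 1, fun i => ⟨((min i (2 ^ m) : ℕ) : ℚ) / 2 ^ m,
      InZ_div _ m (min_le_right _ _)⟩, ?_, ?_, ?_⟩
    · apply Subtype.ext
      simp
    · apply Subtype.ext
      have : 2 ^ m - 1 + 1 = 2 ^ m := by omega
      rw [this]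
      simp only [min_self]
      have h2 : ((2 : ℚ) ^ m) ≠ 0 := by positivity
      push_cast
      field_simp
    · have hcard : 2 ^ m - 1 + 1 = 2 ^ m := by omega
      rw [hcard]
      have : ∀ i ∈ Finset.range (2 ^ m),
          ρ (((min i (2 ^ m) : ℕ) : ℚ) / 2 ^ m) (((min (i + 1) (2 ^ m) : ℕ) : ℚ) / 2 ^ m)
            = a ^ m := by
        intro i hi
        rw [Finset.mem_range] at hi
        rw [min_eq_left (le_of_lt hi), min_eq_left hi]
        have := hstep m hm i hi
        push_cast
        push_cast at this
        convert this using 3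
        try ring
      rw [Finset.sum_congr rfl this, Finset.sum_const, Finset.card_range,
        nsmul_eq_mul]
      push_cast
      try ring
  have hbdd : BddBelow D := ⟨0, hlb⟩
  have hne : D.Nonempty := ⟨_, hmem 1 le_rfl⟩
  have hinf_le : ∀ m : ℕ, 1 ≤ m → sInf D ≤ (2 : ℝ) ^ m * a ^ m :=
    fun m hm => csInf_le hbdd (hmem m hm)
  have h1 : sInf D ≤ 0 := by
    refine ge_of_tendsto htend ?_
    filter_upwards [Filter.eventually_ge_atTop 1] with m hm
    exact hinf_le m hm
  have h2 : 0 ≤ sInf D := le_csInf hne hlb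
  have : sInf D = 0 := le_antisymm h1 h2
  simpa [chainDist, hD] using this
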